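/- For nonnegative integers a, n with a ≤ n-1 and 1 ≤ k ≤ n-1, one has the congruence Σ_{j=1}^{k} (-1)^{j-1} q^{-binom(j,2) - j(k-j)} ([n]_q / [j]_q) qbinom(-1-a, k-j) ≡ qbinom(n-1-a, k) - q^{nk} qbinom(-1-a, k) (mod Φ_n(q)²), as elements of ℤ[q, q^{-1}] (i.e., the difference divided by Φ_n(q)² lies in ℤ[q, q^{-1}] localized appropriately). -/

import Mathlib

open Polynomial Finset

noncomputable def qv : RatFunc ℚ := RatFunc.X

noncomputable def qPochAt (x t : RatFunc ℚ) (k : ℕ) : RatFunc ℚ :=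
  ∏ i ∈ Finset.range k, (1 - x * t ^ i)

noncomputable def qbinomAt (t : RatFunc ℚ) (α : ℤ) (k : ℕ) : RatFunc ℚ :=
  (∏ i ∈ Finset.range k, (1 - t ^ (α - k + 1 + i))) /
    (∏ i ∈ Finset.range k, (1 - t ^ (i + 1)))

noncomputable def qbinom (α : ℤ) (k : ℕ) : RatFunc ℚ := qbinomAt qv α k

noncomputable def toF (g : Polynomial ℤ) : RatFunc ℚ :=
  Polynomial.aeval (RatFunc.X : RatFunc ℚ) g

def modCong (n m : ℕ) (A B : RatFunc ℚ) : Prop :=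
  ∃ f g : Polynomial ℤ, ¬ (Polynomial.cyclotomic n ℤ ∣ g) ∧
    (A - B) * toF g = toF ((Polynomial.cyclotomic n ℤ) ^ m * f)

noncomputable def qint (m : ℤ) : RatFunc ℚ := (1 - qv ^ m) / (1 - qv)

namespace Stmt9

lemma toF_mul (a b : Polynomial ℤ) : toF (a*b) = toF a * toF b := map_mul _ _ _
lemma toF_one : toF 1 = 1 := map_one _
lemma toF_X : toF X = qv := by simp [toF, qv]
lemma toF_pow (a : Polynomial ℤ) (m : ℕ) : toF (a^m) = toF a ^ m := map_pow _ _ _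
lemma toF_X_pow (m : ℕ) : toF (X^m) = qv ^ m := by rw [toF_pow, toF_X]
lemma toF_one_sub_X_pow (m : ℕ) : toF (1 - X^m) = 1 - qv ^ m := by
  simp [toF, qv]

lemma qv_ne_zero : qv ≠ 0 := RatFunc.X_ne_zero

lemma qv_pow_ne_one {m : ℕ} (hm : 1 ≤ m) : qv ^ m ≠ 1 := by
  intro h
  have : (X : Polynomial ℚ) ^ m = 1 := by
    apply RatFunc.algebraMap_injective ℚ
    simpa [qv, RatFunc.algebraMap_X, map_pow] using h
  have := congrArg Polynomial.natDegree this
  simp [Polynomial.natDegree_X_pow] at this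
  omega

lemma one_sub_qv_pow_ne {m : ℕ} (hm : 1 ≤ m) : (1 : RatFunc ℚ) - qv ^ m ≠ 0 := by
  intro h
  exact qv_pow_ne_one hm (by linear_combination -h)

lemma one_sub_qv_zpow_ne {m : ℕ} (hm : 1 ≤ m) : (1 : RatFunc ℚ) - qv ^ (m : ℤ) ≠ 0 := by
  rw [zpow_natCast]; exact one_sub_qv_pow_ne hm

lemma one_sub_qv_ne : (1 : RatFunc ℚ) - qv ≠ 0 := by
  simpa using one_sub_qv_pow_ne le_rfl

end Stmt9

namespace Stmt9

noncomputable def Num (α : ℤ) (k : ℕ) : RatFunc ℚ :=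
  ∏ i ∈ Finset.range k, (1 - qv ^ (α - k + 1 + i))
noncomputable def Den (k : ℕ) : RatFunc ℚ :=
  ∏ i ∈ Finset.range k, (1 - qv ^ (i + 1))

lemma qbinom_eq (α : ℤ) (k : ℕ) : qbinom α k = Num α k / Den k := rfl

lemma Den_succ (k : ℕ) : Den (k+1) = Den k * (1 - qv ^ (k+1)) := by
  rw [Den, prod_range_succ]; rfl

lemma Den_ne (k : ℕ) : Den k ≠ 0 := by
  rw [Den]
  exact prod_ne_zero_iff.2 fun i _ => one_sub_qv_pow_ne (Nat.le_add_left 1 i)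

lemma Num_succ_last (α : ℤ) (k : ℕ) : Num α (k+1) = Num (α-1) k * (1 - qv ^ α) := by
  rw [Num, prod_range_succ, Num]
  congr 1
  · apply prod_congr rfl; intro i _; congr 1; push_cast; ring
  · congr 1; push_cast; ring

lemma Num_succ_first (α : ℤ) (k : ℕ) :
    Num α (k+1) = Num α k * (1 - qv ^ (α - k)) := by
  rw [Num, prod_range_succ', Num]
  congr 1
  · apply prod_congr rfl; intro i _; congr 1; push_cast; ring
  · congr 1; push_cast; ring

lemma qbinom_zero (α : ℤ) : qbinom α 0 = 1 := by
  simp [qbinom_eq, Num, Den]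

lemma qbinom_nat_zero (k : ℕ) : qbinom 0 (k+1) = 0 := by
  rw [qbinom_eq, Num_succ_last]
  simp

lemma pascal (α : ℤ) (k : ℕ) :
    qbinom (α+1) (k+1) = qv ^ (k+1) * qbinom α (k+1) + qbinom α k := by
  rw [qbinom_eq, qbinom_eq, qbinom_eq, Den_succ]
  have h1 : Num (α+1) (k+1) = Num α k * (1 - qv ^ (α+1)) := by
    rw [Num_succ_last]; ring_nf
  have h2 : Num α (k+1) = Num α k * (1 - qv ^ (α - k)) := Num_succ_first α k
  rw [h1, h2]
  have hd := Den_ne k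
  have hdd := one_sub_qv_pow_ne (Nat.le_add_left 1 k)
  field_simp
  have key : (1 : RatFunc ℚ) - qv ^ (α+1) =
      qv ^ (k+1 : ℕ) * (1 - qv ^ (α - k)) + (1 - qv ^ (k+1 : ℕ)) := by
    have h3 : qv ^ (k+1 : ℕ) * qv ^ (α - k) = qv ^ (α+1) := by
      rw [← zpow_natCast qv (k+1), ← zpow_add₀ qv_ne_zero]; congr 1; push_cast; ring
    rw [mul_sub, mul_one, h3]; ring
  linear_combination (Num α k) * key

lemma vandermonde (c : ℤ) (m k : ℕ) :
    qbinom (m + c) k =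
      ∑ j ∈ Finset.range (k+1),
        qv ^ (((m:ℤ) - j) * ((k:ℤ) - j)) * qbinom (m:ℤ) j * qbinom c (k - j) := by
  induction m generalizing k with
  | zero =>
    rw [Finset.sum_range_succ']
    have hz : ∀ j ∈ Finset.range k,
        qv ^ ((((0:ℕ):ℤ) - (j+1:ℕ)) * ((k:ℤ) - (j+1:ℕ))) * qbinom ((0:ℕ):ℤ) (j+1)
          * qbinom c (k - (j+1)) = 0 := by
      intro j _
      have : qbinom ((0:ℕ):ℤ) (j+1) = 0 := by
        simpa using qbinom_nat_zero j
      rw [this]; ring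
    rw [Finset.sum_congr rfl hz]
    simp [qbinom_zero]
  | succ m ih =>
    cases k with
    | zero => simp [qbinom_zero]
    | succ k =>
      rw [Finset.sum_range_succ']
      have hcast : ((m+1:ℕ):ℤ) = (m:ℤ)+1 := by push_cast; ring
      have hterm : ∀ j ∈ Finset.range (k+1),
          qv ^ ((((m+1:ℕ):ℤ) - (j+1:ℕ)) * (((k+1:ℕ):ℤ) - (j+1:ℕ))) * qbinom ((m+1:ℕ):ℤ) (j+1)
            * qbinom c (k+1 - (j+1))
          = qv ^ (k+1:ℕ) * (qv ^ (((m:ℤ) - (j+1:ℕ)) * (((k+1:ℕ):ℤ) - (j+1:ℕ))) * qbinom (m:ℤ) (j+1)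
              * qbinom c (k+1 - (j+1)))
            + qv ^ (((m:ℤ) - j) * ((k:ℤ) - j)) * qbinom (m:ℤ) j * qbinom c (k - j) := by
        intro j hj
        have hsub : k + 1 - (j+1) = k - j := by omega
        rw [hsub, hcast, pascal (m:ℤ) j]
        have h2 : qv ^ ((((m:ℤ)+1) - (j+1:ℕ)) * (((k+1:ℕ):ℤ) - (j+1:ℕ)))
            = qv ^ (((m:ℤ) - j) * ((k:ℤ) - j)) := by
          congr 1; push_cast; ring
        have h1 : qv ^ (((m:ℤ) - j) * ((k:ℤ) - j)) * qv ^ (j+1:ℕ)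
            = qv ^ (k+1:ℕ) * qv ^ (((m:ℤ) - (j+1:ℕ)) * (((k+1:ℕ):ℤ) - (j+1:ℕ))) := by
          rw [← zpow_natCast qv (j+1), ← zpow_natCast qv (k+1),
            ← zpow_add₀ qv_ne_zero, ← zpow_add₀ qv_ne_zero]
          congr 1; push_cast; ring
        rw [h2]
        set X := qbinom (m:ℤ) (j+1)
        set Y := qbinom (m:ℤ) j
        set W := qbinom c (k - j)
        linear_combination (X * W) * h1
      rw [Finset.sum_congr rfl hterm, Finset.sum_add_distrib, ← Finset.mul_sum]
      have hih := ih (k+1)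
      rw [Finset.sum_range_succ'] at hih
      have hca : ((m+1:ℕ):ℤ) + c = ((m:ℤ) + c) + 1 := by push_cast; ring
      have hpas := pascal ((m:ℤ) + c) k
      rw [hca, hpas]
      have hik := ih k
      simp only [Nat.cast_zero, Nat.sub_zero, sub_zero, qbinom_zero, mul_one, one_mul] at hih ⊢
      have hpow : qv ^ (k+1:ℕ) * qv ^ ((m:ℤ) * ((k+1:ℕ):ℤ)) = qv ^ ((((m+1:ℕ)):ℤ) * ((k+1:ℕ):ℤ)) := by
        rw [← zpow_natCast qv (k+1), ← zpow_add₀ qv_ne_zero]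
        congr 1; push_cast; ring
      linear_combination (qv ^ (k+1:ℕ)) * hih + hik + qbinom c (k+1) * hpow
end Stmt9

namespace Stmt9

lemma toF_zero : toF 0 = 0 := by simp [toF]
lemma toF_add (a b : Polynomial ℤ) : toF (a + b) = toF a + toF b := by simp [toF]
lemma toF_neg (a : Polynomial ℤ) : toF (-a) = -toF a := by simp [toF]

lemma toF_eq (g : Polynomial ℤ) :
    toF g = algebraMap (Polynomial ℚ) (RatFunc ℚ) (g.map (Int.castRingHom ℚ)) := by
  have key : ((algebraMap (Polynomial ℚ) (RatFunc ℚ)).comp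
      (Polynomial.mapRingHom (Int.castRingHom ℚ)))
      = ((Polynomial.aeval (RatFunc.X : RatFunc ℚ)).toRingHom :
          Polynomial ℤ →+* RatFunc ℚ) := by
    apply Polynomial.ringHom_ext
    · intro a
      simp [eq_intCast]
    · simp [RatFunc.algebraMap_X]
  have := congrFun (congrArg (fun h => h.toFun) key) g
  simpa [toF] using this.symm

lemma toF_injective : Function.Injective toF := by
  intro a b hab
  rw [toF_eq, toF_eq] at hab
  have := RatFunc.algebraMap_injective ℚ hab
  exact Polynomial.map_injective _ Int.cast_injective this

lemma toF_ne_zero {g : Polynomial ℤ} (hg : g ≠ 0) : toF g ≠ 0 := by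
  intro h
  exact hg (toF_injective (h.trans toF_zero.symm))

/-- A is in the localization: A * g = f with g(z) ≠ 0. -/
def LocAt (z : ℂ) (A : RatFunc ℚ) : Prop :=
  ∃ f g : Polynomial ℤ, (Polynomial.aeval z g ≠ 0) ∧ A * toF g = toF f

namespace LocAt
variable {z : ℂ} {A B : RatFunc ℚ}

lemma of_toF (p : Polynomial ℤ) : LocAt z (toF p) :=
  ⟨p, 1, by rw [map_one]; exact one_ne_zero, by rw [toF_one, mul_one]⟩

lemma one : LocAt z 1 := by have := of_toF (z := z) 1; rwa [toF_one] at this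
lemma zero : LocAt z 0 := by have := of_toF (z := z) 0; rwa [toF_zero] at this

lemma mul (hA : LocAt z A) (hB : LocAt z B) : LocAt z (A * B) := by
  obtain ⟨f1, g1, h1, e1⟩ := hA
  obtain ⟨f2, g2, h2, e2⟩ := hB
  refine ⟨f1 * f2, g1 * g2, by simp [h1, h2], ?_⟩
  rw [toF_mul, toF_mul]
  calc A * B * (toF g1 * toF g2) = (A * toF g1) * (B * toF g2) := by ring
    _ = toF f1 * toF f2 := by rw [e1, e2]

lemma add (hA : LocAt z A) (hB : LocAt z B) : LocAt z (A + B) := by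
  obtain ⟨f1, g1, h1, e1⟩ := hA
  obtain ⟨f2, g2, h2, e2⟩ := hB
  refine ⟨f1 * g2 + f2 * g1, g1 * g2, by simp [h1, h2], ?_⟩
  rw [toF_add, toF_mul, toF_mul, toF_mul]
  calc (A + B) * (toF g1 * toF g2)
      = (A * toF g1) * toF g2 + (B * toF g2) * toF g1 := by ring
    _ = _ := by rw [e1, e2]

lemma neg (hA : LocAt z A) : LocAt z (-A) := by
  obtain ⟨f1, g1, h1, e1⟩ := hA
  exact ⟨-f1, g1, h1, by rw [toF_neg, ← e1]; ring⟩

lemma sub (hA : LocAt z A) (hB : LocAt z B) : LocAt z (A - B) := by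
  simpa [sub_eq_add_neg] using hA.add hB.neg

lemma pow (hA : LocAt z A) (m : ℕ) : LocAt z (A ^ m) := by
  induction m with
  | zero => rw [pow_zero]; exact one
  | succ m ih => rw [pow_succ]; exact ih.mul hA

lemma neg_one_pow (m : ℕ) : LocAt z ((-1 : RatFunc ℚ) ^ m) := (one.neg).pow m

lemma sum {ι : Type*} {s : Finset ι} {F : ι → RatFunc ℚ}
    (h : ∀ i ∈ s, LocAt z (F i)) : LocAt z (∑ i ∈ s, F i) := by
  induction s using Finset.cons_induction with
  | empty => rw [Finset.sum_empty]; exact zero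
  | cons a s ha ih =>
    rw [Finset.sum_cons]
    exact (h a (Finset.mem_cons_self a s)).add
      (ih fun i hi => h i (Finset.mem_cons.2 (Or.inr hi)))

lemma prod {ι : Type*} {s : Finset ι} {F : ι → RatFunc ℚ}
    (h : ∀ i ∈ s, LocAt z (F i)) : LocAt z (∏ i ∈ s, F i) := by
  induction s using Finset.cons_induction with
  | empty => rw [Finset.prod_empty]; exact one
  | cons a s ha ih =>
    rw [Finset.prod_cons]
    exact (h a (Finset.mem_cons_self a s)).mul
      (ih fun i hi => h i (Finset.mem_cons.2 (Or.inr hi)))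

lemma inv_toF {g : Polynomial ℤ} (hz : Polynomial.aeval z g ≠ 0) :
    LocAt z (toF g)⁻¹ := by
  have hg : g ≠ 0 := by rintro rfl; simp at hz
  exact ⟨1, g, hz, by rw [inv_mul_cancel₀ (toF_ne_zero hg), toF_one]⟩

lemma qv_zpow (hz : z ≠ 0) (e : ℤ) : LocAt z (qv ^ e) := by
  refine ⟨X ^ (e + (-e).toNat).toNat, X ^ (-e).toNat, by rw [map_pow, aeval_X]; exact pow_ne_zero _ hz, ?_⟩
  have h1 : toF (X ^ (-e).toNat) = qv ^ ((-e).toNat : ℤ) := by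
    rw [toF_pow, toF]; rw [aeval_X, zpow_natCast]; rfl
  have h2 : toF (X ^ (e + (-e).toNat).toNat) = qv ^ (((e + (-e).toNat).toNat : ℤ)) := by
    rw [toF_pow, toF]; rw [aeval_X, zpow_natCast]; rfl
  rw [h1, h2, ← zpow_add₀ qv_ne_zero]
  congr 1
  omega

lemma one_sub_qv_zpow (hz : z ≠ 0) (e : ℤ) : LocAt z (1 - qv ^ e) :=
  one.sub (qv_zpow hz e)

end LocAt
end Stmt9

namespace Stmt9

variable {n : ℕ} {z : ℂ}

lemma locAt_inv_one_sub_pow (hprim : IsPrimitiveRoot z n) {m : ℕ} (h1 : 1 ≤ m) (h2 : m < n) :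
    LocAt z ((1 - qv ^ m)⁻¹) := by
  have hne : Polynomial.aeval z ((1 : Polynomial ℤ) - X ^ m) ≠ 0 := by
    rw [map_sub, map_one, map_pow, aeval_X]
    intro h
    exact hprim.pow_ne_one_of_pos_of_lt (by omega) h2 (by linear_combination -h)
  have := LocAt.inv_toF hne
  rwa [toF_one_sub_X_pow] at this

lemma locAt_den_inv (hprim : IsPrimitiveRoot z n) {m : ℕ} (hm : m < n) :
    LocAt z ((Den m)⁻¹) := by
  rw [Den, ← Finset.prod_inv_distrib]
  exact LocAt.prod fun i hi =>
    locAt_inv_one_sub_pow hprim (Nat.le_add_left 1 i)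
      (lt_of_le_of_lt (by simpa using Finset.mem_range.1 hi) hm)

lemma locAt_qbinom (hprim : IsPrimitiveRoot z n) (hz : z ≠ 0) (c : ℤ) {m : ℕ} (hm : m < n) :
    LocAt z (qbinom c m) := by
  rw [qbinom_eq, div_eq_mul_inv]
  refine (LocAt.prod fun i _ => LocAt.one.sub (LocAt.qv_zpow hz _)).mul (locAt_den_inv hprim hm)

lemma qint_div_eq (n j : ℕ) (hj : 1 ≤ j) :
    qint (n:ℤ) / qint (j:ℤ) = (1 - qv ^ (n:ℤ)) * (1 - qv ^ (j:ℕ))⁻¹ := by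
  have h1 : (1:RatFunc ℚ) - qv ≠ 0 := one_sub_qv_ne
  have hj' : (1:RatFunc ℚ) - qv ^ (j:ℕ) ≠ 0 := one_sub_qv_pow_ne hj
  rw [qint, qint, zpow_natCast]
  field_simp
  simp only [zpow_natCast] at *
  field_simp

lemma qbinom_n_succ (n i : ℕ) :
    qbinom (n:ℤ) (i+1)
      = (1 - qv ^ (n:ℤ)) * (1 - qv ^ (i+1:ℕ))⁻¹ * qbinom ((n:ℤ)-1) i := by
  have hne : (1:RatFunc ℚ) - qv ^ (i+1:ℕ) ≠ 0 := one_sub_qv_pow_ne (Nat.le_add_left 1 i)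
  rw [qbinom_eq, qbinom_eq, Den_succ, Num_succ_last]
  have hd := Den_ne i
  field_simp

lemma exp3 (i : ℤ) : -(i*(i+1)/2) + -(i+1) = -((i+1)*((i+1)+1)/2) := by
  obtain ⟨c0, hc0⟩ := Int.even_mul_succ_self i
  have h2 : (i+1)*((i+1)+1) = i*(i+1) + 2*(i+1) := by ring
  rw [h2, hc0]
  omega

lemma exp1 (i k d : ℤ) (hd : d = k - (i+1)) :
    (-((i+1) * ((i+1) - 1) / 2) - (i+1) * (k - (i+1))) = (-(i*(i+1)/2)) + (-((i+1) * d)) := by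
  subst hd
  obtain ⟨c0, hc0⟩ := Int.even_mul_succ_self i
  have h1 : (i+1) * ((i+1) - 1) = i*(i+1) := by ring
  rw [h1, hc0]
  generalize (i+1) * (k - (i+1)) = P
  omega

lemma exp2 (n i k d : ℤ) (hd : d = k - (i+1)) :
    (n - (i+1)) * (k - (i+1)) = n * d + -((i+1) * d) := by
  subst hd; ring

lemma qbinom_n_sub_one (n : ℕ) : ∀ i : ℕ,
    qbinom ((n:ℤ)-1) i = (-1 : RatFunc ℚ)^i * qv ^ (-((i:ℤ)*((i:ℤ)+1)/2)) *
      ∏ t ∈ Finset.range i, (1 - (1 - qv ^ (n:ℤ)) * (1 - qv ^ (t+1:ℕ))⁻¹) := by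
  intro i
  induction i with
  | zero =>
    simp [qbinom_zero]
  | succ i ih =>
    have hne : (1:RatFunc ℚ) - qv ^ (i+1:ℕ) ≠ 0 := one_sub_qv_pow_ne (Nat.le_add_left 1 i)
    have hpeel : qbinom ((n:ℤ)-1) (i+1)
        = qbinom ((n:ℤ)-1) i * ((1 - qv ^ ((n:ℤ)-1-(i:ℤ))) * (1 - qv ^ (i+1:ℕ))⁻¹) := by
      rw [qbinom_eq, qbinom_eq, Den_succ, Num_succ_first]
      have hd := Den_ne i
      field_simp
    have hkey : (1 : RatFunc ℚ) - qv ^ ((n:ℤ)-1-(i:ℤ))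
        = -(qv ^ (-((i:ℤ)+1))) * ((1 - qv ^ (i+1:ℕ)) - (1 - qv ^ (n:ℤ))) := by
      have e1 : qv ^ (-((i:ℤ)+1)) * qv ^ ((n:ℤ)) = qv ^ ((n:ℤ)-1-(i:ℤ)) := by
        rw [← zpow_add₀ qv_ne_zero]; congr 1; ring
      have e2 : qv ^ (-((i:ℤ)+1)) * qv ^ (i+1:ℕ) = 1 := by
        rw [← zpow_natCast qv (i+1), ← zpow_add₀ qv_ne_zero]
        rw [show (-((i:ℤ)+1) + ((i:ℕ)+1:ℕ)) = 0 from by push_cast; ring, zpow_zero]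
      linear_combination e1 - e2
    have hT : qv ^ (-((i:ℤ)*((i:ℤ)+1)/2)) * qv ^ (-((i:ℤ)+1))
        = qv ^ (-(((i:ℤ)+1)*(((i:ℤ)+1)+1)/2)) := by
      rw [← zpow_add₀ qv_ne_zero]; congr 1; exact exp3 (i:ℤ)
    have hu : (1 - qv ^ (i+1:ℕ)) * (1 - qv ^ (i+1:ℕ))⁻¹ = 1 := mul_inv_cancel₀ hne
    rw [hpeel, ih, hkey, Finset.prod_range_succ]
    push_cast
    linear_combination
      ((-1 : RatFunc ℚ))^(i+1) *
        (∏ t ∈ Finset.range i, (1 - (1 - qv ^ (n:ℤ)) * (1 - qv ^ (t+1:ℕ))⁻¹)) *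
        (((1 - qv ^ (i+1:ℕ)) - (1 - qv ^ (n:ℤ))) * (1 - qv ^ (i+1:ℕ))⁻¹) * hT
      + ((-1 : RatFunc ℚ))^(i+1) * qv ^ (-(((i:ℤ)+1)*(((i:ℤ)+1)+1)/2)) *
        (∏ t ∈ Finset.range i, (1 - (1 - qv ^ (n:ℤ)) * (1 - qv ^ (t+1:ℕ))⁻¹)) * hu

lemma geom_qv (n d : ℕ) :
    qv ^ ((n:ℤ) * (d:ℤ)) = 1 - (1 - qv ^ (n:ℤ)) * ∑ t ∈ Finset.range d, (qv ^ (n:ℤ))^t := by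
  have hg := geom_sum_mul (qv ^ (n:ℤ)) d
  have h1 : qv ^ ((n:ℤ)*(d:ℤ)) = (qv ^ (n:ℤ))^d := by
    rw [zpow_mul, zpow_natCast]
  rw [h1]
  linear_combination -hg

lemma prod_one_sub_loc {z : ℂ} (x : RatFunc ℚ) (hx : LocAt z x) {ι : Type*} (s : Finset ι)
    (v : ι → RatFunc ℚ) (hv : ∀ i ∈ s, LocAt z (v i)) :
    ∃ Z, LocAt z Z ∧ ∏ i ∈ s, (1 - x * v i) = 1 - x * Z := by
  induction s using Finset.cons_induction with
  | empty => exact ⟨0, LocAt.zero, by simp⟩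
  | cons a s ha ih =>
    obtain ⟨Z, hZ, hprod⟩ := ih fun i hi => hv i (Finset.mem_cons.2 (Or.inr hi))
    have hva := hv a (Finset.mem_cons_self a s)
    refine ⟨v a + Z - x * (v a * Z), (hva.add hZ).sub (hx.mul (hva.mul hZ)), ?_⟩
    rw [Finset.prod_cons, hprod]
    ring

lemma sum_factor_loc {z : ℂ} (x : RatFunc ℚ) {ι : Type*} (s : Finset ι)
    (F : ι → RatFunc ℚ) (h : ∀ i ∈ s, ∃ Z, LocAt z Z ∧ F i = x * Z) :
    ∃ Z, LocAt z Z ∧ ∑ i ∈ s, F i = x * Z := by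
  induction s using Finset.cons_induction with
  | empty => exact ⟨0, LocAt.zero, by simp⟩
  | cons a s ha ih =>
    obtain ⟨Z, hZ, hsum⟩ := ih fun i hi => h i (Finset.mem_cons.2 (Or.inr hi))
    obtain ⟨Za, hZa, ha'⟩ := h a (Finset.mem_cons_self a s)
    exact ⟨Za + Z, hZa.add hZ, by rw [Finset.sum_cons, hsum, ha']; ring⟩

lemma per_term (n k : ℕ) (hn : 2 ≤ n) (hk2 : k ≤ n - 1) (z : ℂ)
    (hprim : IsPrimitiveRoot z n) (hz : z ≠ 0) (c : ℤ) (i : ℕ) (hi : i < k) :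
    ∃ Z, LocAt z Z ∧
      (-1 : RatFunc ℚ) ^ (1 + i - 1) *
          qv ^ (-(((1+i : ℕ) : ℤ) * (((1+i : ℕ) : ℤ) - 1) / 2) - ((1+i : ℕ) : ℤ) * ((k : ℤ) - ((1+i : ℕ) : ℤ))) *
          (qint (n:ℤ) / qint ((1+i : ℕ) : ℤ)) * qbinom c (k - (1 + i))
        - qv ^ (((n:ℤ) - ((i+1 : ℕ) : ℤ)) * ((k:ℤ) - ((i+1 : ℕ) : ℤ))) * qbinom (n:ℤ) (i+1) * qbinom c (k - (i+1))
      = (1 - qv ^ (n:ℤ))^2 * Z := by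
  rw [show (1:ℕ) + i = i + 1 from by omega]
  set x := 1 - qv ^ (n:ℤ) with hx
  have hxloc : LocAt z x := LocAt.one.sub (LocAt.qv_zpow hz _)
  have hd : ((k - (i+1) : ℕ) : ℤ) = (k:ℤ) - ((i:ℤ)+1) := by omega
  set E : RatFunc ℚ := ∑ t ∈ Finset.range (k - (i+1)), (qv ^ (n:ℤ))^t with hE
  have hEloc : LocAt z E := LocAt.sum fun t _ => (LocAt.qv_zpow hz _).pow t
  obtain ⟨Z₁, hZ₁loc, hZ₁⟩ := prod_one_sub_loc x hxloc (Finset.range i)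
      (fun t => (1 - qv ^ (t+1:ℕ))⁻¹)
      (fun t ht => locAt_inv_one_sub_pow hprim (Nat.le_add_left 1 t)
        (by have := Finset.mem_range.1 ht; omega))
  have hs1 : qv ^ (-(((i+1 : ℕ) : ℤ) * (((i+1 : ℕ) : ℤ) - 1) / 2) - ((i+1 : ℕ) : ℤ) * ((k : ℤ) - ((i+1 : ℕ) : ℤ)))
      = qv ^ (-((i:ℤ)*((i:ℤ)+1)/2)) * qv ^ (-(((i:ℤ)+1) * ((k - (i+1) : ℕ) : ℤ))) := by
    rw [← zpow_add₀ qv_ne_zero]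
    congr 1
    push_cast
    rw [hd]
    exact exp1 (i:ℤ) (k:ℤ) _ (by omega)
  have hs2 : qv ^ (((n:ℤ) - ((i+1 : ℕ) : ℤ)) * ((k:ℤ) - ((i+1 : ℕ) : ℤ)))
      = (1 - x * E) * qv ^ (-(((i:ℤ)+1) * ((k - (i+1) : ℕ) : ℤ))) := by
    rw [hE, hx, ← geom_qv n (k - (i+1)), ← zpow_add₀ qv_ne_zero]
    congr 1
    push_cast
    rw [hd]
    exact exp2 (n:ℤ) (i:ℤ) (k:ℤ) _ (by omega)
  have hqd : qint (n:ℤ) / qint ((i+1 : ℕ) : ℤ) = x * (1 - qv ^ (i+1:ℕ))⁻¹ :=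
    qint_div_eq n (i+1) (Nat.le_add_left 1 i)
  have hpow1 : (-1 : RatFunc ℚ) ^ (i + 1 - 1) = (-1 : RatFunc ℚ) ^ i := by
    congr 1
  rw [hpow1, hs1, hs2, hqd, qbinom_n_succ n i, qbinom_n_sub_one n i, hZ₁]
  refine ⟨(-1 : RatFunc ℚ)^i * qv ^ (-((i:ℤ)*((i:ℤ)+1)/2)) *
      qv ^ (-(((i:ℤ)+1) * ((k - (i+1) : ℕ) : ℤ))) *
      (1 - qv ^ (i+1:ℕ))⁻¹ * qbinom c (k - (i+1)) * (E + Z₁ - x * (E * Z₁)), ?_, ?_⟩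
  · exact (((((LocAt.neg_one_pow i).mul (LocAt.qv_zpow hz _)).mul (LocAt.qv_zpow hz _)).mul
      (locAt_inv_one_sub_pow hprim (Nat.le_add_left 1 i) (by omega))).mul
      (locAt_qbinom hprim hz c (m := k - (i+1)) (by omega))).mul
        ((hEloc.add hZ₁loc).sub (hxloc.mul (hEloc.mul hZ₁loc)))
  · ring

end Stmt9

open Stmt9 in

/-- For `a ≤ n-1` and `1 ≤ k ≤ n-1`:
`Σ_{j=1}^k (-1)^{j-1} q^{-binom(j,2)-j(k-j)} ([n]_q/[j]_q) [-1-a choose k-j]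
  ≡ [n-1-a choose k] - q^{nk} [-1-a choose k] (mod Φ_n(q)²)`. -/
theorem stmt9 (n a k : ℕ) (ha : a ≤ n - 1) (hk1 : 1 ≤ k) (hk2 : k ≤ n - 1) :
    modCong n 2
      (∑ j ∈ Finset.Icc 1 k,
        (-1 : RatFunc ℚ) ^ (j - 1) *
          qv ^ (-((j : ℤ) * ((j : ℤ) - 1) / 2) - (j : ℤ) * ((k : ℤ) - j)) *
          (qint n / qint j) * qbinom (-1 - (a : ℤ)) (k - j))
      (qbinom ((n : ℤ) - 1 - a) k - qv ^ (n * k) * qbinom (-1 - (a : ℤ)) k) := by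
  have hn2 : 2 ≤ n := by omega
  have hn0 : (n : ℕ) ≠ 0 := by omega
  set ζ : ℂ := Complex.exp (2 * Real.pi * Complex.I / n) with hζ
  have hprim : IsPrimitiveRoot ζ n := Complex.isPrimitiveRoot_exp n hn0
  have hζ0 : ζ ≠ 0 := by
    intro h
    have := hprim.pow_eq_one
    rw [h] at this
    simp [zero_pow hn0] at this
  -- Vandermonde, with the j = 0 term split off
  have hvd := vandermonde (-1 - (a:ℤ)) n k
  rw [Finset.sum_range_succ'] at hvd
  simp only [Nat.cast_zero, sub_zero, Nat.sub_zero, qbinom_zero, mul_one] at hvd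
  have hnc : (n:ℤ) - 1 - a = (n:ℤ) + (-1 - (a:ℤ)) := by ring
  have hq : qv ^ (n * k) = qv ^ ((n:ℤ) * (k:ℤ)) := by
    rw [← zpow_natCast qv (n*k)]; congr 1
  -- the per-term congruence
  have key : ∀ i ∈ Finset.range k, ∃ Z, LocAt ζ Z ∧
      ((-1 : RatFunc ℚ) ^ (1 + i - 1) *
          qv ^ (-(((1+i : ℕ) : ℤ) * (((1+i : ℕ) : ℤ) - 1) / 2) - ((1+i : ℕ) : ℤ) * ((k : ℤ) - ((1+i : ℕ) : ℤ))) *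
          (qint (n:ℤ) / qint ((1+i : ℕ) : ℤ)) * qbinom (-1 - (a:ℤ)) (k - (1 + i))
        - qv ^ (((n:ℤ) - ((i+1 : ℕ) : ℤ)) * ((k:ℤ) - ((i+1 : ℕ) : ℤ))) * qbinom (n:ℤ) (i+1) *
            qbinom (-1 - (a:ℤ)) (k - (i+1)))
      = ((1 - qv ^ (n:ℤ))^2) * Z := fun i hi =>
    per_term n k hn2 hk2 ζ hprim hζ0 (-1 - (a:ℤ)) i (Finset.mem_range.1 hi)
  obtain ⟨Z, hZloc, hZeq⟩ := sum_factor_loc ((1 - qv ^ (n:ℤ))^2) (Finset.range k) _ key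
  rw [Finset.sum_sub_distrib] at hZeq
  obtain ⟨p, g, hg, hpg⟩ := hZloc
  obtain ⟨co, hco⟩ := Polynomial.cyclotomic.dvd_X_pow_sub_one n ℤ
  refine ⟨co^2 * p, g, ?_, ?_⟩
  · rintro ⟨h, rfl⟩
    apply hg
    have hroot : (Polynomial.aeval ζ) (Polynomial.cyclotomic n ℤ) = 0 := by
      rw [Polynomial.aeval_def, Polynomial.eval₂_eq_eval_map, map_cyclotomic]
      exact hprim.isRoot_cyclotomic (by omega)
    rw [map_mul, hroot, zero_mul]
  · have htf : toF ((Polynomial.cyclotomic n ℤ)^2 * (co^2 * p))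
        = (1 - qv ^ (n:ℤ))^2 * toF p := by
      have hpoly : (Polynomial.cyclotomic n ℤ)^2 * (co^2 * p) = (1 - X^n)^2 * p := by
        have h2 : ((1:Polynomial ℤ) - X^n)^2 = ((Polynomial.cyclotomic n ℤ) * co)^2 := by
          rw [← hco]; ring
        rw [h2]; ring
      rw [hpoly, toF_mul, toF_pow, toF_one_sub_X_pow, ← zpow_natCast qv n]
    rw [← Finset.Ico_add_one_right_eq_Icc, Finset.sum_Ico_eq_sum_range, hnc, hvd, hq, htf]
    simp only [Nat.add_sub_cancel]
    linear_combination (toF g) * hZeq + ((1 - qv ^ (n:ℤ))^2) * hpg
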